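/- Let (M₁,d₁,m₀), (M₂,d₂,n₀) be pointed metric spaces, p ∈ [1,∞], t ≥ 0, and let σ ⊆ M₁ and τ ⊆ M₂ \ {n₀} be finite nonempty sets. Set A = max_{x∈σ} d₁(x,m₀) and B = max_{y∈τ} d₂(y,n₀). Then all pairwise d_{∨,p}-distances within σ ∪ τ are ≤ t if and only if: (1) all pairwise d₁-distances in σ are ≤ t, (2) all pairwise d₂-distances in τ are ≤ t, and (3) ‖(A,B)‖_{ℓ^p} ≤ t. -/
import Mathlib


open scoped ENNReal

/-- A function `d : X → X → ℝ` is a metric. -/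
def IsMetric {X : Type*} (d : X → X → ℝ) : Prop :=
  (∀ x y, 0 ≤ d x y) ∧ (∀ x y, d x y = 0 ↔ x = y) ∧ (∀ x y, d x y = d y x) ∧
    (∀ x y z, d x z ≤ d x y + d y z)

/-- The `ℓ^p` norm of a pair of reals, `p ∈ [1,∞]`. -/
noncomputable def lpnorm (p : ℝ≥0∞) (a b : ℝ) : ℝ :=
  if p = ∞ then max |a| |b| else (|a| ^ p.toReal + |b| ^ p.toReal) ^ (1 / p.toReal)

/-- The `ℓ^p`-wedge distance on the disjoint union `M₁ ⊕ M₂` (basepoints `m₀, n₀`):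
`d₁` on `M₁`, `d₂` on `M₂`, cross distances `‖(d₁(x,m₀), d₂(y,n₀))‖_{ℓ^p}`.
Passing to the quotient identifying `m₀ ∼ n₀` gives the wedge metric `d_{∨,p}`. -/
noncomputable def dWedge {M₁ M₂ : Type*} (d₁ : M₁ → M₁ → ℝ) (d₂ : M₂ → M₂ → ℝ)
    (m₀ : M₁) (n₀ : M₂) (p : ℝ≥0∞) : M₁ ⊕ M₂ → M₁ ⊕ M₂ → ℝ
  | Sum.inl a, Sum.inl b => d₁ a b
  | Sum.inr a, Sum.inr b => d₂ a b
  | Sum.inl a, Sum.inr b => lpnorm p (d₁ a m₀) (d₂ b n₀)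
  | Sum.inr a, Sum.inl b => lpnorm p (d₁ b m₀) (d₂ a n₀)

lemma lpnorm_mono {p : ℝ≥0∞} (hp : 1 ≤ p) {a b a' b' : ℝ} (ha : 0 ≤ a) (hb : 0 ≤ b)
    (haa : a ≤ a') (hbb : b ≤ b') : lpnorm p a b ≤ lpnorm p a' b' := by
  unfold lpnorm
  split_ifs with h
  · exact max_le_max (abs_le_abs haa (by linarith [abs_nonneg a])) (abs_le_abs hbb (by linarith [abs_nonneg b]))
  · have hr : 0 < p.toReal := ENNReal.toReal_pos (by positivity) h
    apply Real.rpow_le_rpow (by positivity)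
    · exact add_le_add (Real.rpow_le_rpow (abs_nonneg a) (abs_le_abs haa (by linarith [abs_nonneg a])) hr.le)
        (Real.rpow_le_rpow (abs_nonneg b) (abs_le_abs hbb (by linarith [abs_nonneg b])) hr.le)
    · positivity

/-- mixed Rips simplices in the `ℓ^p`-wedge. For finite nonempty
`σ ⊆ M₁` and `τ ⊆ M₂ \ {n₀}`, with `A = max_{x∈σ} d₁(x,m₀)`, `B = max_{y∈τ} d₂(y,n₀)`,
all pairwise wedge distances within `σ ∪ τ` are `≤ t` iff all pairwise `d₁`-distances in
`σ` are `≤ t`, all pairwise `d₂`-distances in `τ` are `≤ t`, and `‖(A,B)‖_{ℓ^p} ≤ t`. -/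
theorem wedge_rips_mixed_simplex {M₁ M₂ : Type*} [DecidableEq M₁] [DecidableEq M₂]
    (d₁ : M₁ → M₁ → ℝ) (d₂ : M₂ → M₂ → ℝ)
    (hd₁ : IsMetric d₁) (hd₂ : IsMetric d₂) (m₀ : M₁) (n₀ : M₂)
    (p : ℝ≥0∞) (hp : 1 ≤ p) (t : ℝ) (ht : 0 ≤ t)
    (σ : Finset M₁) (τ : Finset M₂) (hσ : σ.Nonempty) (hτ : τ.Nonempty)
    (hτn : ∀ y ∈ τ, y ≠ n₀) :
    ((∀ u ∈ σ.image Sum.inl ∪ τ.image (Sum.inr : M₂ → M₁ ⊕ M₂),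
        ∀ v ∈ σ.image Sum.inl ∪ τ.image (Sum.inr : M₂ → M₁ ⊕ M₂),
          dWedge d₁ d₂ m₀ n₀ p u v ≤ t)
      ↔ ((∀ x ∈ σ, ∀ x' ∈ σ, d₁ x x' ≤ t) ∧ (∀ y ∈ τ, ∀ y' ∈ τ, d₂ y y' ≤ t) ∧
          lpnorm p (σ.sup' hσ fun x => d₁ x m₀) (τ.sup' hτ fun y => d₂ y n₀) ≤ t)) := by
  constructor
  · intro h
    refine ⟨fun x hx x' hx' => h _ (Finset.mem_union_left _ (Finset.mem_image_of_mem _ hx))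
      _ (Finset.mem_union_left _ (Finset.mem_image_of_mem _ hx')),
      fun y hy y' hy' => h _ (Finset.mem_union_right _ (Finset.mem_image_of_mem _ hy))
      _ (Finset.mem_union_right _ (Finset.mem_image_of_mem _ hy')), ?_⟩
    obtain ⟨x₀, hx₀, hA⟩ := Finset.exists_mem_eq_sup' hσ fun x => d₁ x m₀
    obtain ⟨y₀, hy₀, hB⟩ := Finset.exists_mem_eq_sup' hτ fun y => d₂ y n₀
    rw [hA, hB]
    exact h _ (Finset.mem_union_left _ (Finset.mem_image_of_mem _ hx₀))
      _ (Finset.mem_union_right _ (Finset.mem_image_of_mem _ hy₀))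
  · rintro ⟨h1, h2, h3⟩ u hu v hv
    simp only [Finset.mem_union, Finset.mem_image] at hu hv
    have cross : ∀ x ∈ σ, ∀ y ∈ τ, lpnorm p (d₁ x m₀) (d₂ y n₀) ≤ t := fun x hx y hy =>
      le_trans (lpnorm_mono hp (hd₁.1 x m₀) (hd₂.1 y n₀)
        (Finset.le_sup' (fun x => d₁ x m₀) hx) (Finset.le_sup' (fun y => d₂ y n₀) hy)) h3
    rcases hu with ⟨x, hx, rfl⟩ | ⟨y, hy, rfl⟩ <;>
      rcases hv with ⟨x', hx', rfl⟩ | ⟨y', hy', rfl⟩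
    · exact h1 x hx x' hx'
    · exact cross x hx y' hy'
    · exact cross x' hx' y hy
    · exact h2 y hy y' hy'
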